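/- Let n ≥ 1 and let s > 0 be a non-integer real number, with m = ⌊s⌋ and σ = s − m ∈ (0,1). There exists a constant C > 0, depending only on n and s, such that for every Schwartz function v on ℝ^n, every x ∈ ℝ^n, and every r > 0: [v]²_{B_r(x), s} ≤ C · Σ_{k ≤ −1} [v]²_{A_k, s}, where the sum runs over all integers k ≤ −1 and A_k := B_{2^{k+1}r}(x) ∖ B_{2^{k−1}r}(x); the inequality is read in [0,∞]. -/

import Mathlib

open MeasureTheory
open scoped ENNReal

/-- The squared Gagliardo-type seminorm `[v]²_{D,s}` for non-integer `s > 0` with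
`m = ⌊s⌋` and `σ = s − m`:
`[v]²_{D,s} = ∫_D ∫_D ‖∇^m v(z₁) − ∇^m v(z₂)‖² / |z₁ − z₂|^{n+2σ} dz₁ dz₂` (in `[0,∞]`). -/
noncomputable def semiNormSq (n : ℕ) (s : ℝ) (D : Set (EuclideanSpace ℝ (Fin n)))
    (v : EuclideanSpace ℝ (Fin n) → ℝ) : ℝ≥0∞ :=
  ∫⁻ z₁ in D, ∫⁻ z₂ in D,
    ENNReal.ofReal
      (‖iteratedFDeriv ℝ ⌊s⌋₊ v z₁ - iteratedFDeriv ℝ ⌊s⌋₊ v z₂‖ ^ 2 /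
        ‖z₁ - z₂‖ ^ ((n : ℝ) + 2 * (s - ⌊s⌋₊)))

namespace Stmt16

open Metric Set Function

abbrev Euc (n : ℕ) := EuclideanSpace ℝ (Fin n)

variable {n : ℕ} {Y : Type*} [NormedAddCommGroup Y]

noncomputable def ker (p : ℝ) (F : Euc n → Y) (z₁ z₂ : Euc n) : ℝ≥0∞ :=
  ENNReal.ofReal (‖F z₁ - F z₂‖ ^ 2 / ‖z₁ - z₂‖ ^ p)

noncomputable def gker (F : Euc n → Y) (z₁ z₂ : Euc n) : ℝ≥0∞ :=
  ENNReal.ofReal (‖F z₁ - F z₂‖ ^ 2)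

noncomputable def Jf (p : ℝ) (F : Euc n → Y) (D : Set (Euc n)) : ℝ≥0∞ :=
  ∫⁻ z₁ in D, ∫⁻ z₂ in D, ker p F z₁ z₂

def DD (x : Euc n) (r : ℝ) (k : ℤ) : Set (Euc n) :=
  ball x ((2:ℝ)^k * r) \ ball x ((2:ℝ)^(k-1) * r)

def AA (x : Euc n) (r : ℝ) (k : ℤ) : Set (Euc n) :=
  ball x ((2:ℝ)^(k+1) * r) \ ball x ((2:ℝ)^(k-1) * r)

noncomputable def PP (p : ℝ) (F : Euc n → Y) (x : Euc n) (r : ℝ) (j k : ℤ) : ℝ≥0∞ :=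
  ∫⁻ z₁ in DD x r j, ∫⁻ z₂ in DD x r k, ker p F z₁ z₂

noncomputable def QQ (F : Euc n → Y) (x : Euc n) (r : ℝ) (j k : ℤ) : ℝ≥0∞ :=
  ∫⁻ z₁ in DD x r j, ∫⁻ z₂ in DD x r k, gker F z₁ z₂

noncomputable def w2 (m : ℤ) : ℝ≥0∞ := ENNReal.ofReal ((2:ℝ)^m)

lemma w2_ne_zero (m : ℤ) : w2 m ≠ 0 := by
  simp [w2, ENNReal.ofReal_eq_zero]
  positivity

lemma w2_ne_top (m : ℤ) : w2 m ≠ ∞ := ENNReal.ofReal_ne_top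

lemma w2_mul (a b : ℤ) : w2 (a + b) = w2 a * w2 b := by
  rw [w2, w2, w2, zpow_add₀ (two_ne_zero), ENNReal.ofReal_mul (by positivity)]

lemma mem_DD {x : Euc n} {r : ℝ} {k : ℤ} {z : Euc n} :
    z ∈ DD x r k ↔ dist z x < (2:ℝ)^k * r ∧ (2:ℝ)^(k-1) * r ≤ dist z x := by
  simp [DD, mem_diff, mem_ball, not_lt]

lemma mem_AA {x : Euc n} {r : ℝ} {k : ℤ} {z : Euc n} :
    z ∈ AA x r k ↔ dist z x < (2:ℝ)^(k+1) * r ∧ (2:ℝ)^(k-1) * r ≤ dist z x := by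
  simp [AA, mem_diff, mem_ball, not_lt]

lemma DD_subset_AA {x : Euc n} {r : ℝ} (hr : 0 < r) (k : ℤ) : DD x r k ⊆ AA x r k := by
  intro z hz
  rw [mem_DD] at hz
  rw [mem_AA]
  refine ⟨lt_of_lt_of_le hz.1 ?_, hz.2⟩
  have : (2:ℝ)^k ≤ 2^(k+1) := zpow_le_zpow_right₀ one_le_two (by omega)
  nlinarith

lemma DD_succ_subset_AA {x : Euc n} {r : ℝ} (hr : 0 < r) (k : ℤ) : DD x r (k+1) ⊆ AA x r k := by
  intro z hz
  rw [mem_DD] at hz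
  rw [mem_AA]
  refine ⟨hz.1, le_trans ?_ hz.2⟩
  have : (2:ℝ)^(k-1) ≤ 2^(k+1-1) := zpow_le_zpow_right₀ one_le_two (by omega)
  nlinarith

lemma DD_subset_AA_pred {x : Euc n} {r : ℝ} (hr : 0 < r) (k : ℤ) : DD x r k ⊆ AA x r (k-1) := by
  intro z hz
  rw [mem_DD] at hz
  rw [mem_AA]
  refine ⟨by simpa using hz.1, le_trans ?_ hz.2⟩
  have : (2:ℝ)^(k-1-1) ≤ 2^(k-1) := zpow_le_zpow_right₀ one_le_two (by omega)
  nlinarith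

lemma measurableSet_DD (x : Euc n) (r : ℝ) (k : ℤ) : MeasurableSet (DD x r k) :=
  measurableSet_ball.diff measurableSet_ball

lemma measurable_ker {p : ℝ} (hp : 0 ≤ p) {F : Euc n → Y} (hF : Continuous F) :
    Measurable (uncurry (ker p F)) := by
  apply Measurable.ennreal_ofReal
  apply Measurable.div
  · exact (((hF.comp continuous_fst).sub (hF.comp continuous_snd)).norm.pow 2).measurable
  · exact ((Real.continuous_rpow_const hp).comp
      (continuous_fst.sub continuous_snd).norm).measurable

lemma measurable_gker {F : Euc n → Y} (hF : Continuous F) :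
    Measurable (uncurry (gker F)) := by
  apply Measurable.ennreal_ofReal
  exact ((((hF.comp continuous_fst).sub (hF.comp continuous_snd)).norm.pow 2)).measurable

lemma ker_le_gker_far {p : ℝ} (hp : 0 < p) {F : Euc n → Y} {z₁ z₂ : Euc n} {M : ℝ}
    (hM : 0 < M) (h : M ≤ ‖z₁ - z₂‖) :
    ker p F z₁ z₂ ≤ (ENNReal.ofReal (M ^ p))⁻¹ * gker F z₁ z₂ := by
  have hMp : (0:ℝ) < M ^ p := Real.rpow_pos_of_pos hM p
  rw [ker, gker, ← ENNReal.ofReal_inv_of_pos hMp, ← ENNReal.ofReal_mul (by positivity)]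
  apply ENNReal.ofReal_le_ofReal
  have h1 : ‖F z₁ - F z₂‖ ^ 2 / ‖z₁ - z₂‖ ^ p ≤ ‖F z₁ - F z₂‖ ^ 2 / M ^ p :=
    div_le_div_of_nonneg_left (by positivity) hMp
      (Real.rpow_le_rpow (le_of_lt hM) h (le_of_lt hp))
  calc ‖F z₁ - F z₂‖ ^ 2 / ‖z₁ - z₂‖ ^ p ≤ ‖F z₁ - F z₂‖ ^ 2 / M ^ p := h1
    _ = (M ^ p)⁻¹ * ‖F z₁ - F z₂‖ ^ 2 := by rw [div_eq_mul_inv, mul_comm]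

lemma gker_le_ker_near {p : ℝ} (hp : 0 < p) {F : Euc n → Y} {z₁ z₂ : Euc n} {M : ℝ}
    (h : ‖z₁ - z₂‖ ≤ M) :
    gker F z₁ z₂ ≤ ENNReal.ofReal (M ^ p) * ker p F z₁ z₂ := by
  have hM0 : (0:ℝ) ≤ M := le_trans (norm_nonneg _) h
  rw [ker, gker, ← ENNReal.ofReal_mul (Real.rpow_nonneg hM0 p)]
  apply ENNReal.ofReal_le_ofReal
  rcases eq_or_ne z₁ z₂ with rfl | hne
  · simp
  · have h0 : (0:ℝ) < ‖z₁ - z₂‖ := by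
      simpa [norm_pos_iff, sub_eq_zero] using hne
    have hpow : (0:ℝ) < ‖z₁ - z₂‖ ^ p := Real.rpow_pos_of_pos h0 p
    have hle : ‖z₁ - z₂‖ ^ p ≤ M ^ p := Real.rpow_le_rpow (le_of_lt h0) h (le_of_lt hp)
    rw [mul_comm, div_mul_eq_mul_div, le_div_iff₀ hpow]
    gcongr

lemma gker_chain (F : Euc n → Y) (z₁ z₂ w : Euc n) :
    gker F z₁ z₂ ≤ 3 * gker F z₁ w + (3/2) * gker F w z₂ := by
  have h32 : ((3:ℝ≥0∞)/2) = ENNReal.ofReal (3/2) := by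
    rw [ENNReal.ofReal_div_of_pos (by norm_num)]; norm_num
  have h3 : (3:ℝ≥0∞) = ENNReal.ofReal 3 := by norm_num
  rw [gker, gker, gker, h32, h3, ← ENNReal.ofReal_mul (by norm_num),
    ← ENNReal.ofReal_mul (by norm_num), ← ENNReal.ofReal_add (by positivity) (by positivity)]
  apply ENNReal.ofReal_le_ofReal
  have tri : ‖F z₁ - F z₂‖ ≤ ‖F z₁ - F w‖ + ‖F w - F z₂‖ := norm_sub_le_norm_sub_add_norm_sub _ _ _
  nlinarith [sq_nonneg (‖F z₁ - F w‖ - ‖F w - F z₂‖ / 2), norm_nonneg (F z₁ - F z₂),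
    norm_nonneg (F z₁ - F w), norm_nonneg (F w - F z₂)]

lemma ker_symm (p : ℝ) (F : Euc n → Y) (z₁ z₂ : Euc n) : ker p F z₁ z₂ = ker p F z₂ z₁ := by
  rw [ker, ker, norm_sub_rev, norm_sub_rev z₁]

lemma gker_symm (F : Euc n → Y) (z₁ z₂ : Euc n) : gker F z₁ z₂ = gker F z₂ z₁ := by
  rw [gker, gker, norm_sub_rev]

lemma double_mono {f : Euc n → Euc n → ℝ≥0∞} {S₁ S₂ D₁ D₂ : Set (Euc n)}
    (h₁ : S₁ ⊆ D₁) (h₂ : S₂ ⊆ D₂) :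
    ∫⁻ z₁ in S₁, ∫⁻ z₂ in S₂, f z₁ z₂ ≤ ∫⁻ z₁ in D₁, ∫⁻ z₂ in D₂, f z₁ z₂ :=
  le_trans (lintegral_mono fun _ => lintegral_mono_set h₂) (lintegral_mono_set h₁)

lemma PP_diag_le {p : ℝ} {F : Euc n → Y} {x : Euc n} {r : ℝ} (hr : 0 < r) (j : ℤ) :
    PP p F x r j j ≤ Jf p F (AA x r (j-1)) :=
  double_mono (DD_subset_AA_pred hr j) (DD_subset_AA_pred hr j)

lemma PP_adj_le {p : ℝ} {F : Euc n → Y} {x : Euc n} {r : ℝ} (hr : 0 < r) (j : ℤ) :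
    PP p F x r j (j+1) ≤ Jf p F (AA x r j) :=
  double_mono (DD_subset_AA hr j) (DD_succ_subset_AA hr j)

lemma diam_AA {x : Euc n} {r : ℝ} (hr : 0 < r) {i : ℤ} {z₁ z₂ : Euc n}
    (h₁ : z₁ ∈ AA x r i) (h₂ : z₂ ∈ AA x r i) : ‖z₁ - z₂‖ ≤ (2:ℝ)^(i+2) * r := by
  rw [mem_AA] at h₁ h₂
  have h := dist_triangle z₁ x z₂
  rw [← dist_eq_norm]
  have h2 : dist x z₂ = dist z₂ x := dist_comm _ _
  have hpow : (2:ℝ)^(i+2) = 2^(i+1) + 2^(i+1) := by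
    rw [zpow_add₀ (two_ne_zero : (2:ℝ) ≠ 0) i 2, zpow_add₀ (two_ne_zero : (2:ℝ) ≠ 0) i 1]
    norm_num; ring
  nlinarith [h₁.1, h₂.1]

/-- The key comparison: a `gker` double integral over subsets of an annulus is controlled
by the `ker` double integral over the annulus. -/
lemma gker_int_le {p : ℝ} (hp : 0 < p) {F : Euc n → Y} {x : Euc n} {r : ℝ} (hr : 0 < r)
    {S₁ S₂ : Set (Euc n)} {i : ℤ} (h₁ : S₁ ⊆ AA x r i) (h₂ : S₂ ⊆ AA x r i) :
    ∫⁻ z₁ in S₁, ∫⁻ z₂ in S₂, gker F z₁ z₂ ≤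
      ENNReal.ofReal (((2:ℝ)^(i+2) * r) ^ p) * Jf p F (AA x r i) := by
  have step1 : ∫⁻ z₁ in S₁, ∫⁻ z₂ in S₂, gker F z₁ z₂ ≤
      ∫⁻ z₁ in AA x r i, ∫⁻ z₂ in AA x r i, gker F z₁ z₂ := double_mono h₁ h₂
  have hAmeas : MeasurableSet (AA x r i) := measurableSet_ball.diff measurableSet_ball
  have step2 : ∫⁻ z₁ in AA x r i, ∫⁻ z₂ in AA x r i, gker F z₁ z₂ ≤
      ∫⁻ z₁ in AA x r i, ∫⁻ z₂ in AA x r i,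
        ENNReal.ofReal (((2:ℝ)^(i+2) * r) ^ p) * ker p F z₁ z₂ := by
    refine setLIntegral_mono' hAmeas fun z₁ hz₁ => ?_
    refine setLIntegral_mono' hAmeas fun z₂ hz₂ => ?_
    exact gker_le_ker_near hp (diam_AA hr hz₁ hz₂)
  have step3 : ∫⁻ z₁ in AA x r i, ∫⁻ z₂ in AA x r i,
      ENNReal.ofReal (((2:ℝ)^(i+2) * r) ^ p) * ker p F z₁ z₂ =
      ENNReal.ofReal (((2:ℝ)^(i+2) * r) ^ p) * Jf p F (AA x r i) := by
    rw [Jf, ← lintegral_const_mul' _ _ ENNReal.ofReal_ne_top]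
    congr 1
    ext z₁
    rw [← lintegral_const_mul' _ _ ENNReal.ofReal_ne_top]
  exact le_trans step1 (le_of_le_of_eq step2 step3)

lemma QQ_adj_le {p : ℝ} (hp : 0 < p) {F : Euc n → Y} {x : Euc n} {r : ℝ} (hr : 0 < r) (i : ℤ) :
    QQ F x r i (i+1) ≤ ENNReal.ofReal (((2:ℝ)^(i+2) * r) ^ p) * Jf p F (AA x r i) :=
  gker_int_le hp hr (DD_subset_AA hr i) (DD_succ_subset_AA hr i)

lemma dist_DD_far {x : Euc n} {r : ℝ} (hr : 0 < r) {j k : ℤ} (hjk : j + 2 ≤ k)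
    {z₁ z₂ : Euc n} (h₁ : z₁ ∈ DD x r j) (h₂ : z₂ ∈ DD x r k) :
    (2:ℝ)^(k-2) * r ≤ ‖z₁ - z₂‖ := by
  rw [mem_DD] at h₁ h₂
  rw [← dist_eq_norm]
  have htri : dist z₂ x ≤ dist z₂ z₁ + dist z₁ x := dist_triangle _ _ _
  have hcomm : dist z₂ z₁ = dist z₁ z₂ := dist_comm _ _
  have hj : (2:ℝ)^j ≤ 2^(k-2) := zpow_le_zpow_right₀ one_le_two (by omega)
  have hk : (2:ℝ)^(k-1) = 2^(k-2) + 2^(k-2) := by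
    have : (2:ℝ)^(k-1) = 2^(k-2) * 2 := by
      rw [← zpow_add_one₀ (two_ne_zero : (2:ℝ) ≠ 0)]; ring_nf
    rw [this]; ring
  nlinarith [h₁.1, h₂.2]

lemma PP_far_le_QQ {p : ℝ} (hp : 0 < p) {F : Euc n → Y} {x : Euc n} {r : ℝ} (hr : 0 < r)
    {j k : ℤ} (hjk : j + 2 ≤ k) :
    PP p F x r j k ≤ (ENNReal.ofReal (((2:ℝ)^(k-2) * r) ^ p))⁻¹ * QQ F x r j k := by
  have hM : (0:ℝ) < (2:ℝ)^(k-2) * r := by positivity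
  have step : PP p F x r j k ≤ ∫⁻ z₁ in DD x r j, ∫⁻ z₂ in DD x r k,
      (ENNReal.ofReal (((2:ℝ)^(k-2) * r) ^ p))⁻¹ * gker F z₁ z₂ := by
    refine setLIntegral_mono' (measurableSet_DD x r j) fun z₁ hz₁ => ?_
    refine setLIntegral_mono' (measurableSet_DD x r k) fun z₂ hz₂ => ?_
    exact ker_le_gker_far hp hM (dist_DD_far hr hjk hz₁ hz₂)
  refine le_trans step (le_of_eq ?_)
  have hinv : (ENNReal.ofReal (((2:ℝ)^(k-2) * r) ^ p))⁻¹ ≠ ∞ := by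
    simp [ENNReal.inv_ne_top, ENNReal.ofReal_eq_zero, not_le]
    positivity
  rw [QQ, ← lintegral_const_mul' _ _ hinv]
  congr 1
  ext z₁
  rw [← lintegral_const_mul' _ _ hinv]

lemma PP_symm {p : ℝ} (hp : 0 ≤ p) {F : Euc n → Y} (hF : Continuous F) (x : Euc n) (r : ℝ)
    (j k : ℤ) : PP p F x r j k = PP p F x r k j := by
  rw [PP, PP]
  rw [lintegral_lintegral_swap ((measurable_ker hp hF).aemeasurable)]
  congr 1
  ext z₂
  congr 1
  ext z₁
  exact ker_symm p F z₁ z₂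

noncomputable def cst (n : ℕ) (r : ℝ) : ℝ≥0∞ :=
  ENNReal.ofReal (r^n * (1 - (2:ℝ)^(-(n:ℤ)))) * volume (ball (0 : Euc n) 1)

lemma two_zpow_neg_lt_one (hn : 1 ≤ n) : (2:ℝ)^(-(n:ℤ)) < 1 := by
  have : (2:ℝ)^(-(n:ℤ)) < 2^(0:ℤ) := zpow_lt_zpow_right₀ one_lt_two (by omega)
  simpa using this

lemma volume_DD (hn : 1 ≤ n) {x : Euc n} {r : ℝ} (hr : 0 < r) (k : ℤ) :
    volume (DD x r k) = w2 ((n:ℤ)*k) * cst n r := by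
  haveI : Nonempty (Fin n) := ⟨⟨0, hn⟩⟩
  have hsub : ball x ((2:ℝ)^(k-1) * r) ⊆ ball x ((2:ℝ)^k * r) :=
    ball_subset_ball (by
      have : (2:ℝ)^(k-1) ≤ 2^k := zpow_le_zpow_right₀ one_le_two (by omega)
      nlinarith)
  have hb : ∀ m : ℤ, volume (ball x ((2:ℝ)^m * r)) =
      ENNReal.ofReal (((2:ℝ)^m * r) ^ n) * volume (ball (0 : Euc n) 1) := by
    intro m
    rw [Measure.addHaar_ball _ _ (by positivity : (0:ℝ) ≤ (2:ℝ)^m * r),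
      finrank_euclideanSpace_fin]
  have hfin : volume (ball x ((2:ℝ)^(k-1) * r)) ≠ ∞ := measure_ball_lt_top.ne
  have hVfin : volume (ball (0 : Euc n) 1) ≠ ∞ := measure_ball_lt_top.ne
  have hRI : ((2:ℝ)^k * r)^n - ((2:ℝ)^(k-1) * r)^n
      = (2:ℝ)^((n:ℤ)*k) * (r^n * (1 - (2:ℝ)^(-(n:ℤ)))) := by
    have h1 : ((2:ℝ)^k)^(n:ℕ) = (2:ℝ)^(k*(n:ℤ)) := by rw [← zpow_natCast ((2:ℝ)^k), ← zpow_mul]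
    have h2 : ((2:ℝ)^(k-1))^(n:ℕ) = (2:ℝ)^(k*(n:ℤ)) * (2:ℝ)^(-(n:ℤ)) := by
      rw [← zpow_natCast ((2:ℝ)^(k-1)), ← zpow_mul, ← zpow_add₀ (two_ne_zero)]
      ring_nf
    rw [mul_pow, mul_pow, h1, h2, mul_comm (n:ℤ) k]
    ring
  rw [DD, measure_diff hsub measurableSet_ball.nullMeasurableSet hfin, hb, hb,
    ← ENNReal.sub_mul (fun _ _ => hVfin),
    ← ENNReal.ofReal_sub _ (by positivity), hRI,
    ENNReal.ofReal_mul (by positivity), cst, w2, mul_assoc]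

lemma cst_ne_zero (hn : 1 ≤ n) {r : ℝ} (hr : 0 < r) : cst n r ≠ 0 := by
  haveI : Nonempty (Fin n) := ⟨⟨0, hn⟩⟩
  apply mul_ne_zero
  · rw [Ne, ENNReal.ofReal_eq_zero, not_le]
    have := two_zpow_neg_lt_one hn
    have hrn : (0:ℝ) < r^n := by positivity
    nlinarith
  · exact (measure_ball_pos _ _ one_pos).ne'

lemma cst_ne_top (hn : 1 ≤ n) (r : ℝ) : cst n r ≠ ∞ := by
  haveI : Nonempty (Fin n) := ⟨⟨0, hn⟩⟩
  exact ENNReal.mul_ne_top ENNReal.ofReal_ne_top measure_ball_lt_top.ne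

lemma nu_ne_zero (hn : 1 ≤ n) {x : Euc n} {r : ℝ} (hr : 0 < r) (k : ℤ) :
    volume (DD x r k) ≠ 0 := by
  rw [volume_DD hn hr]
  exact mul_ne_zero (w2_ne_zero _) (cst_ne_zero hn hr)

lemma nu_ne_top (hn : 1 ≤ n) {x : Euc n} {r : ℝ} (hr : 0 < r) (k : ℤ) :
    volume (DD x r k) ≠ ∞ := by
  haveI : Nonempty (Fin n) := ⟨⟨0, hn⟩⟩
  exact (lt_of_le_of_lt (measure_mono diff_subset) measure_ball_lt_top).ne

lemma nu_ratio (hn : 1 ≤ n) {x : Euc n} {r : ℝ} (hr : 0 < r) (k l : ℤ) :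
    volume (DD x r k) = w2 ((n:ℤ)*(k-l)) * volume (DD x r l) := by
  rw [volume_DD hn hr, volume_DD hn hr, ← mul_assoc, ← w2_mul]
  congr 2
  ring

lemma QQ_step (hn : 1 ≤ n) {F : Euc n → Y} (hF : Continuous F) {x : Euc n} {r : ℝ}
    (hr : 0 < r) (j k : ℤ) :
    QQ F x r j k ≤ 3 * w2 ((n:ℤ)*(k-j-1)) * QQ F x r j (j+1)
      + (3/2) * w2 (-(n:ℤ)) * QQ F x r (j+1) k := by
  classical
  set g : Euc n → Euc n → ℝ≥0∞ := gker F with hg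
  have hmeasg : Measurable (uncurry g) := measurable_gker hF
  have hmeasg1 : ∀ z₁ : Euc n, Measurable (g z₁) := fun z₁ =>
    hmeasg.comp (measurable_const.prodMk measurable_id)
  have hmeasg2 : ∀ z₂ : Euc n, Measurable (fun w => g w z₂) := fun z₂ =>
    hmeasg.comp (measurable_id.prodMk measurable_const)
  have h32top : (3/2 : ℝ≥0∞) ≠ ∞ := by
    simp [ENNReal.div_eq_top]
  set ν : ℤ → ℝ≥0∞ := fun t => volume (DD x r t) with hν
  have hνtop : ∀ t, ν t ≠ ∞ := fun t => nu_ne_top hn hr t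
  have hνzero : ∀ t, ν t ≠ 0 := fun t => nu_ne_zero hn hr t
  -- step A
  have stepA : ∀ z₁ z₂ : Euc n, ν (j+1) * g z₁ z₂ ≤
      3 * (∫⁻ w in DD x r (j+1), g z₁ w) + (3/2) * ∫⁻ w in DD x r (j+1), g w z₂ := by
    intro z₁ z₂
    have e1 : ν (j+1) * g z₁ z₂ = ∫⁻ _ in DD x r (j+1), g z₁ z₂ := by
      rw [setLIntegral_const, mul_comm]
    rw [e1]
    calc ∫⁻ w in DD x r (j+1), g z₁ z₂
        ≤ ∫⁻ w in DD x r (j+1), (3 * g z₁ w + (3/2) * g w z₂) :=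
          lintegral_mono fun w => gker_chain F z₁ z₂ w
      _ = 3 * (∫⁻ w in DD x r (j+1), g z₁ w) + (3/2) * ∫⁻ w in DD x r (j+1), g w z₂ := by
          rw [lintegral_add_left ((hmeasg1 z₁).const_mul 3),
            lintegral_const_mul' _ _ (by norm_num : (3:ℝ≥0∞) ≠ ∞),
            lintegral_const_mul' _ _ h32top]
  -- step B
  have stepB : ∀ z₁ : Euc n, ν (j+1) * ∫⁻ z₂ in DD x r k, g z₁ z₂ ≤
      (3 * ν k) * (∫⁻ w in DD x r (j+1), g z₁ w)
        + (3/2) * ∫⁻ z₂ in DD x r k, ∫⁻ w in DD x r (j+1), g w z₂ := by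
    intro z₁
    rw [← lintegral_const_mul' _ _ (hνtop (j+1))]
    calc ∫⁻ z₂ in DD x r k, ν (j+1) * g z₁ z₂
        ≤ ∫⁻ z₂ in DD x r k,
            (3 * (∫⁻ w in DD x r (j+1), g z₁ w) + (3/2) * ∫⁻ w in DD x r (j+1), g w z₂) :=
          lintegral_mono fun z₂ => stepA z₁ z₂
      _ = (3 * (∫⁻ w in DD x r (j+1), g z₁ w)) * ν k
            + (3/2) * ∫⁻ z₂ in DD x r k, ∫⁻ w in DD x r (j+1), g w z₂ := by
          rw [lintegral_add_left measurable_const, setLIntegral_const,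
            lintegral_const_mul' _ _ h32top]
      _ = (3 * ν k) * (∫⁻ w in DD x r (j+1), g z₁ w)
            + (3/2) * ∫⁻ z₂ in DD x r k, ∫⁻ w in DD x r (j+1), g w z₂ := by
          ring
  -- step C
  have hswap : ∫⁻ z₂ in DD x r k, ∫⁻ w in DD x r (j+1), g w z₂
      = QQ F x r (j+1) k := by
    rw [QQ]
    exact lintegral_lintegral_swap ((hmeasg.comp measurable_swap).aemeasurable)
  have stepC : ν (j+1) * QQ F x r j k ≤
      (3 * ν k) * QQ F x r j (j+1) + ((3/2) * QQ F x r (j+1) k) * ν j := by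
    rw [QQ, ← lintegral_const_mul' _ _ (hνtop (j+1))]
    have hImeas : Measurable fun z₁ => ∫⁻ w in DD x r (j+1), g z₁ w :=
      hmeasg.lintegral_prod_right'
    calc ∫⁻ z₁ in DD x r j, ν (j+1) * ∫⁻ z₂ in DD x r k, g z₁ z₂
        ≤ ∫⁻ z₁ in DD x r j,
            ((3 * ν k) * (∫⁻ w in DD x r (j+1), g z₁ w)
              + (3/2) * ∫⁻ z₂ in DD x r k, ∫⁻ w in DD x r (j+1), g w z₂) :=
          lintegral_mono fun z₁ => stepB z₁
      _ = (3 * ν k) * QQ F x r j (j+1) + ((3/2) * QQ F x r (j+1) k) * ν j := by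
          rw [lintegral_add_left (hImeas.const_mul _),
            lintegral_const_mul' _ _ (by exact ENNReal.mul_ne_top (by norm_num) (hνtop k)),
            setLIntegral_const, hswap, QQ]
          rfl
  -- use ratios and cancel
  have hratk : ν k = w2 ((n:ℤ)*(k-j-1)) * ν (j+1) := by
    have := nu_ratio hn (x := x) hr k (j+1)
    simpa [sub_sub] using this
  have hratj : ν j = w2 (-(n:ℤ)) * ν (j+1) := by
    have := nu_ratio hn (x := x) hr j (j+1)
    have e : (n:ℤ) * (j - (j+1)) = -(n:ℤ) := by ring
    rwa [e] at this
  rw [hratk, hratj] at stepC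
  have stepC' : ν (j+1) * QQ F x r j k ≤
      ν (j+1) * (3 * w2 ((n:ℤ)*(k-j-1)) * QQ F x r j (j+1)
        + (3/2) * w2 (-(n:ℤ)) * QQ F x r (j+1) k) := by
    calc ν (j+1) * QQ F x r j k
        ≤ 3 * (w2 ((n:ℤ)*(k-j-1)) * ν (j+1)) * QQ F x r j (j+1)
            + (3/2) * QQ F x r (j+1) k * (w2 (-(n:ℤ)) * ν (j+1)) := stepC
      _ = ν (j+1) * (3 * w2 ((n:ℤ)*(k-j-1)) * QQ F x r j (j+1)
            + (3/2) * w2 (-(n:ℤ)) * QQ F x r (j+1) k) := by ring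
  exact (ENNReal.mul_le_mul_iff_right (hνzero (j+1)) (hνtop (j+1))).mp stepC'

lemma w2_zero : w2 0 = 1 := by simp [w2]

lemma QQ_unroll (hn : 1 ≤ n) {F : Euc n → Y} (hF : Continuous F) {x : Euc n} {r : ℝ}
    (hr : 0 < r) :
    ∀ (d : ℕ) (j : ℤ), QQ F x r j (j + (d:ℤ) + 1) ≤
      ∑ a ∈ Finset.range (d+1),
        3 * (3/2:ℝ≥0∞)^a * w2 ((n:ℤ)*((d:ℤ) - 2*(a:ℤ))) * QQ F x r (j+(a:ℤ)) (j+(a:ℤ)+1) := by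
  intro d
  induction d with
  | zero =>
    intro j
    rw [Finset.sum_range_one]
    norm_num [w2_zero]
    exact le_mul_of_one_le_left' (by norm_num)
  | succ d ih =>
    intro j
    have hk : j + ((d+1:ℕ):ℤ) + 1 = j + (d:ℤ) + 2 := by push_cast; ring
    rw [hk]
    have hstep := QQ_step hn hF (x := x) hr j (j + (d:ℤ) + 2)
    have hk2 : j + 1 + (d:ℤ) + 1 = j + (d:ℤ) + 2 := by ring
    have ih' := ih (j+1)
    rw [hk2] at ih'
    refine le_trans hstep ?_
    have he : (n:ℤ)*((j + (d:ℤ) + 2) - j - 1) = (n:ℤ)*((d:ℤ)+1) := by ring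
    rw [he]
    rw [Finset.sum_range_succ']
    have hfirst : 3 * w2 ((n:ℤ)*((d:ℤ)+1)) * QQ F x r j (j+1) ≤
        3 * (3/2:ℝ≥0∞)^(0:ℕ) * w2 ((n:ℤ)*(((d+1:ℕ):ℤ) - 2*((0:ℕ):ℤ)))
          * QQ F x r (j+((0:ℕ):ℤ)) (j+((0:ℕ):ℤ)+1) := by
      apply le_of_eq
      push_cast
      norm_num
    have hsecond : (3/2:ℝ≥0∞) * w2 (-(n:ℤ)) * QQ F x r (j+1) (j + (d:ℤ) + 2) ≤
        ∑ a ∈ Finset.range (d+1),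
          3 * (3/2:ℝ≥0∞)^(a+1) * w2 ((n:ℤ)*(((d+1:ℕ):ℤ) - 2*((a+1:ℕ):ℤ)))
            * QQ F x r (j+((a+1:ℕ):ℤ)) (j+((a+1:ℕ):ℤ)+1) := by
      calc (3/2:ℝ≥0∞) * w2 (-(n:ℤ)) * QQ F x r (j+1) (j + (d:ℤ) + 2)
          ≤ (3/2:ℝ≥0∞) * w2 (-(n:ℤ)) *
            ∑ a ∈ Finset.range (d+1),
              3 * (3/2:ℝ≥0∞)^a * w2 ((n:ℤ)*((d:ℤ) - 2*(a:ℤ)))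
                * QQ F x r (j+1+(a:ℤ)) (j+1+(a:ℤ)+1) := mul_le_mul_right ih' _
        _ = _ := by
            rw [Finset.mul_sum]
            apply Finset.sum_congr rfl
            intro a _
            have hw : w2 (-(n:ℤ)) * w2 ((n:ℤ)*((d:ℤ) - 2*(a:ℤ)))
                = w2 ((n:ℤ)*(((d+1:ℕ):ℤ) - 2*((a+1:ℕ):ℤ))) := by
              rw [← w2_mul]
              congr 1
              push_cast
              ring
            have hj1 : j + 1 + (a:ℤ) = j + ((a+1:ℕ):ℤ) := by push_cast; ring
            rw [← hw, hj1, pow_succ]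
            ring
    calc 3 * w2 ((n:ℤ)*((d:ℤ)+1)) * QQ F x r j (j+1)
          + (3/2:ℝ≥0∞) * w2 (-(n:ℤ)) * QQ F x r (j+1) (j + (d:ℤ) + 2)
        ≤ (3 * (3/2:ℝ≥0∞)^(0:ℕ) * w2 ((n:ℤ)*(((d+1:ℕ):ℤ) - 2*((0:ℕ):ℤ)))
            * QQ F x r (j+((0:ℕ):ℤ)) (j+((0:ℕ):ℤ)+1))
          + ∑ a ∈ Finset.range (d+1),
            3 * (3/2:ℝ≥0∞)^(a+1) * w2 ((n:ℤ)*(((d+1:ℕ):ℤ) - 2*((a+1:ℕ):ℤ)))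
              * QQ F x r (j+((a+1:ℕ):ℤ)) (j+((a+1:ℕ):ℤ)+1) := add_le_add hfirst hsecond
      _ = _ := add_comm _ _

lemma coeff_real_eq {σ p : ℝ} (hσ : 0 < σ) (hp : p = n + 2*σ) {r : ℝ} (hr : 0 < r)
    (j : ℤ) (e u : ℕ) (hu : u ≤ e) :
    3*(3/2:ℝ)^u*(2:ℝ)^((n:ℤ)*((e:ℤ)-2*(u:ℤ)))*((2:ℝ)^(j+(u:ℤ)+2)*r)^p =
    ((2:ℝ)^(j+(e:ℤ)+1-2)*r)^p *
      ((3*(2:ℝ)^(3*p)) * (3/2^(n+1):ℝ)^u * ((2:ℝ)^(-(2*σ)))^(e-u)) := by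
  have h2 : (0:ℝ) < 2 := two_pos
  have hcast : ((e - u : ℕ):ℝ) = (e:ℝ) - (u:ℝ) := by
    push_cast [Nat.cast_sub hu]; ring
  rw [Real.mul_rpow (by positivity) hr.le, Real.mul_rpow (by positivity) hr.le]
  rw [div_pow (3:ℝ) (2^(n+1)) u, ← pow_mul, div_pow (3:ℝ) 2 u]
  simp only [← Real.rpow_intCast 2, ← Real.rpow_natCast 2, ← Real.rpow_natCast 3]
  simp only [← Real.rpow_natCast ((2:ℝ) ^ (-(2*σ))) (e-u)]
  rw [← Real.rpow_mul h2.le, ← Real.rpow_mul h2.le, ← Real.rpow_mul h2.le]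
  rw [div_eq_mul_inv, div_eq_mul_inv, ← Real.rpow_neg h2.le, ← Real.rpow_neg h2.le]
  have collectL : ∀ a b c R : ℝ, 3 * ((3:ℝ)^(u:ℝ) * (2:ℝ)^a) * (2:ℝ)^b * ((2:ℝ)^c * R)
      = 3 * (3:ℝ)^(u:ℝ) * R * (2:ℝ)^(a+b+c) := by
    intro a b c R
    rw [Real.rpow_add h2, Real.rpow_add h2]
    ring
  have collectR : ∀ z w v q R : ℝ, (2:ℝ)^z * R * (3 * (2:ℝ)^w * ((3:ℝ)^(u:ℝ) * (2:ℝ)^v) * (2:ℝ)^q)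
      = 3 * (3:ℝ)^(u:ℝ) * R * (2:ℝ)^(z+w+v+q) := by
    intro z w v q R
    rw [Real.rpow_add h2, Real.rpow_add h2, Real.rpow_add h2]
    ring
  rw [collectL, collectR]
  congr 1
  rw [hp]
  push_cast [hcast]
  ring

lemma ofReal_coeff {σ p : ℝ} (hσ : 0 < σ) (hp : p = n + 2*σ) {r : ℝ} (hr : 0 < r)
    (j : ℤ) (e u : ℕ) (hu : u ≤ e) :
    3 * (3/2:ℝ≥0∞)^u * w2 ((n:ℤ)*((e:ℤ)-2*(u:ℤ)))
        * ENNReal.ofReal (((2:ℝ)^(j+(u:ℤ)+2)*r)^p) =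
    ENNReal.ofReal (((2:ℝ)^(j+(e:ℤ)+1-2)*r)^p) *
      ENNReal.ofReal ((3*(2:ℝ)^(3*p)) * (3/2^(n+1):ℝ)^u * ((2:ℝ)^(-(2*σ)))^(e-u)) := by
  have h3 : (3:ℝ≥0∞) = ENNReal.ofReal 3 := by norm_num
  have h32 : ((3:ℝ≥0∞)/2) = ENNReal.ofReal (3/2) := by
    rw [ENNReal.ofReal_div_of_pos (by norm_num)]; norm_num
  rw [h32, ← ENNReal.ofReal_pow (by norm_num), h3, w2,
    ← ENNReal.ofReal_mul (by norm_num), ← ENNReal.ofReal_mul (by positivity),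
    ← ENNReal.ofReal_mul (by positivity), ← ENNReal.ofReal_mul (by positivity)]
  exact congrArg ENNReal.ofReal (coeff_real_eq hσ hp hr j e u hu)

lemma PP_far (hn : 1 ≤ n) {p σ : ℝ} (hσ : 0 < σ) (hp : p = n + 2*σ) {F : Euc n → Y}
    (hF : Continuous F) {x : Euc n} {r : ℝ} (hr : 0 < r) (b e : ℕ) :
    PP p F x r (-((b+1+e : ℕ):ℤ)) (-(b:ℤ)) ≤
      ∑ u ∈ Finset.range (e+1),
        ENNReal.ofReal ((3*(2:ℝ)^(3*p)) * (3/2^(n+1):ℝ)^u * ((2:ℝ)^(-(2*σ)))^(e-u)) *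
          Jf p F (AA x r (-1 - ((b + (e - u) : ℕ):ℤ))) := by
  have hp0 : 0 < p := by rw [hp]; positivity
  set j : ℤ := -(b:ℤ) - 1 - (e:ℤ) with hjdef
  have hjcast : (-((b+1+e : ℕ):ℤ)) = j := by push_cast; ring
  have hk : -(b:ℤ) = j + (e:ℤ) + 1 := by ring
  rw [hjcast, hk]
  rcases Nat.eq_zero_or_pos e with rfl | he
  · -- adjacent case
    rw [Finset.sum_range_one]
    have h1 : PP p F x r j (j + (0:ℕ) + 1) ≤ Jf p F (AA x r j) := by
      have := PP_adj_le (p := p) (F := F) (x := x) hr j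
      simpa using this
    have hidx : (-1 - ((b + (0 - 0) : ℕ):ℤ)) = j := by push_cast; simp [hjdef]; ring
    rw [hidx]
    refine le_trans h1 ?_
    have hone : (1:ℝ≥0∞) ≤ ENNReal.ofReal ((3*(2:ℝ)^(3*p)) * (3/2^(n+1):ℝ)^0 * ((2:ℝ)^(-(2*σ)))^(0-0)) := by
      simp only [Nat.sub_self, pow_zero, mul_one]
      rw [show (1:ℝ≥0∞) = ENNReal.ofReal 1 by norm_num]
      apply ENNReal.ofReal_le_ofReal
      have h2p : (1:ℝ) ≤ (2:ℝ)^(3*p) := Real.one_le_rpow one_le_two (by positivity)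
      nlinarith
    calc Jf p F (AA x r j) = 1 * Jf p F (AA x r j) := (one_mul _).symm
      _ ≤ _ := mul_le_mul_left hone _
  · -- far case
    have hjk : j + 2 ≤ j + (e:ℤ) + 1 := by omega
    have step1 := PP_far_le_QQ hp0 hr (F := F) (x := x) hjk
    have step2 := QQ_unroll hn hF (x := x) hr e j
    have hkm2 : j + (e:ℤ) + 1 - 2 = j + (e:ℤ) - 1 := by ring
    calc PP p F x r j (j + (e:ℤ) + 1)
        ≤ (ENNReal.ofReal (((2:ℝ)^(j + (e:ℤ) + 1 - 2) * r) ^ p))⁻¹ * QQ F x r j (j + (e:ℤ) + 1) := step1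
      _ ≤ (ENNReal.ofReal (((2:ℝ)^(j + (e:ℤ) + 1 - 2) * r) ^ p))⁻¹ *
            ∑ u ∈ Finset.range (e+1),
              3 * (3/2:ℝ≥0∞)^u * w2 ((n:ℤ)*((e:ℤ) - 2*(u:ℤ))) * QQ F x r (j+(u:ℤ)) (j+(u:ℤ)+1) :=
          mul_le_mul_right step2 _
      _ = ∑ u ∈ Finset.range (e+1), (ENNReal.ofReal (((2:ℝ)^(j + (e:ℤ) + 1 - 2) * r) ^ p))⁻¹ *
            (3 * (3/2:ℝ≥0∞)^u * w2 ((n:ℤ)*((e:ℤ) - 2*(u:ℤ))) * QQ F x r (j+(u:ℤ)) (j+(u:ℤ)+1)) := by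
          rw [Finset.mul_sum]
      _ ≤ _ := by
          apply Finset.sum_le_sum
          intro u hu
          have hue : u ≤ e := by
            simp only [Finset.mem_range] at hu; omega
          have hadj := QQ_adj_le hp0 hr (F := F) (x := x) (j+(u:ℤ))
          have hApos : (0:ℝ) < ((2:ℝ)^(j + (e:ℤ) + 1 - 2) * r) ^ p := by positivity
          have hA0 : ENNReal.ofReal (((2:ℝ)^(j + (e:ℤ) + 1 - 2) * r) ^ p) ≠ 0 := by
            simp [ENNReal.ofReal_eq_zero, not_le, hApos]
          have hAtop : ENNReal.ofReal (((2:ℝ)^(j + (e:ℤ) + 1 - 2) * r) ^ p) ≠ ∞ :=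
            ENNReal.ofReal_ne_top
          have hidx : j + (u:ℤ) = -1 - ((b + (e - u) : ℕ):ℤ) := by
            push_cast [Nat.cast_sub hue]
            rw [hjdef]
            ring
          calc (ENNReal.ofReal (((2:ℝ)^(j + (e:ℤ) + 1 - 2) * r) ^ p))⁻¹ *
                (3 * (3/2:ℝ≥0∞)^u * w2 ((n:ℤ)*((e:ℤ) - 2*(u:ℤ))) * QQ F x r (j+(u:ℤ)) (j+(u:ℤ)+1))
              ≤ (ENNReal.ofReal (((2:ℝ)^(j + (e:ℤ) + 1 - 2) * r) ^ p))⁻¹ *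
                (3 * (3/2:ℝ≥0∞)^u * w2 ((n:ℤ)*((e:ℤ) - 2*(u:ℤ))) *
                  (ENNReal.ofReal (((2:ℝ)^(j+(u:ℤ)+2)*r)^p) * Jf p F (AA x r (j+(u:ℤ))))) := by
                exact mul_le_mul_right (mul_le_mul_right hadj _) _
            _ = (ENNReal.ofReal (((2:ℝ)^(j + (e:ℤ) + 1 - 2) * r) ^ p))⁻¹ *
                (ENNReal.ofReal (((2:ℝ)^(j + (e:ℤ) + 1 - 2) * r) ^ p) *
                  (ENNReal.ofReal ((3*(2:ℝ)^(3*p)) * (3/2^(n+1):ℝ)^u * ((2:ℝ)^(-(2*σ)))^(e-u)) *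
                    Jf p F (AA x r (j+(u:ℤ))))) := by
                rw [← mul_assoc (3 * (3/2:ℝ≥0∞)^u * w2 ((n:ℤ)*((e:ℤ) - 2*(u:ℤ))))]
                rw [ofReal_coeff hσ hp hr j e u hue]
                ring
            _ = ENNReal.ofReal ((3*(2:ℝ)^(3*p)) * (3/2^(n+1):ℝ)^u * ((2:ℝ)^(-(2*σ)))^(e-u)) *
                  Jf p F (AA x r (j+(u:ℤ))) := by
                rw [← mul_assoc, ENNReal.inv_mul_cancel hA0 hAtop, one_mul]
            _ = _ := by rw [hidx]

lemma DD_disjoint {x : Euc n} {r : ℝ} (hr : 0 < r) {k l : ℤ} (hkl : k < l) :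
    Disjoint (DD x r k) (DD x r l) := by
  rw [Set.disjoint_left]
  intro z hzk hzl
  rw [mem_DD] at hzk hzl
  have h1 : (2:ℝ)^k ≤ 2^(l-1) := zpow_le_zpow_right₀ one_le_two (by omega)
  nlinarith [hzk.1, hzl.2]

lemma DD_pairwise {x : Euc n} {r : ℝ} (hr : 0 < r) :
    Pairwise (Disjoint on fun i : ℕ => DD x r (-(i:ℤ))) := by
  intro i j hij
  simp only [Function.onFun]
  rcases lt_or_gt_of_ne hij with h | h
  · exact (DD_disjoint hr (by omega : -(j:ℤ) < -(i:ℤ))).symm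
  · exact DD_disjoint hr (by omega : -(i:ℤ) < -(j:ℤ))

lemma subset_union_DD {x : Euc n} {r : ℝ} (hr : 0 < r) :
    ball x r \ {x} ⊆ ⋃ i : ℕ, DD x r (-(i:ℤ)) := by
  intro z hz
  obtain ⟨hzb, hzx⟩ := hz
  have hzx' : z ≠ x := by simpa using hzx
  have hd : 0 < dist z x := dist_pos.mpr hzx'
  have hdr : dist z x < r := mem_ball.mp hzb
  have hq : 0 < dist z x / r := by positivity
  obtain ⟨m, hm1, hm2⟩ := exists_mem_Ico_zpow hq one_lt_two
  have hm0 : m < 0 := by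
    by_contra hcon
    push_neg at hcon
    have h1 : (2:ℝ)^(0:ℤ) ≤ 2^m := zpow_le_zpow_right₀ one_le_two hcon
    have h2 : dist z x / r < 1 := (div_lt_one hr).mpr hdr
    simp only [zpow_zero] at h1
    linarith
  refine mem_iUnion.mpr ⟨(-(m+1)).toNat, ?_⟩
  have htn : -(((-(m+1)).toNat : ℤ)) = m+1 := by
    have := Int.toNat_of_nonneg (by omega : (0:ℤ) ≤ -(m+1))
    omega
  rw [mem_DD, htn]
  constructor
  · calc dist z x = dist z x / r * r := by field_simp
      _ < 2^(m+1) * r := by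
          apply mul_lt_mul_of_pos_right hm2 hr
  · have he : m + 1 - 1 = m := by ring
    rw [he]
    calc (2:ℝ)^m * r ≤ dist z x / r * r := mul_le_mul_of_nonneg_right hm1 hr.le
      _ = dist z x := by field_simp

lemma DD_subset_ball {x : Euc n} {r : ℝ} (hr : 0 < r) (i : ℕ) :
    DD x r (-(i:ℤ)) ⊆ ball x r := by
  intro z hz
  rw [mem_DD] at hz
  rw [mem_ball]
  have h1 : (2:ℝ)^(-(i:ℤ)) ≤ 2^(0:ℤ) := zpow_le_zpow_right₀ one_le_two (by omega)
  simp only [zpow_zero] at h1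
  nlinarith [hz.1]

lemma ball_ae_eq (hn : 1 ≤ n) {x : Euc n} {r : ℝ} (hr : 0 < r) :
    (ball x r : Set (Euc n)) =ᵐ[volume] ⋃ i : ℕ, DD x r (-(i:ℤ)) := by
  haveI : Nonempty (Fin n) := ⟨⟨0, hn⟩⟩
  rw [MeasureTheory.ae_eq_set]
  constructor
  · have hsub : ball x r \ (⋃ i : ℕ, DD x r (-(i:ℤ))) ⊆ {x} := by
      intro z hz
      by_contra hzx
      exact hz.2 (subset_union_DD hr ⟨hz.1, hzx⟩)
    exact measure_mono_null hsub (measure_singleton x)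
  · have he : (⋃ i : ℕ, DD x r (-(i:ℤ))) \ ball x r = ∅ := by
      rw [diff_eq_empty]
      exact iUnion_subset fun i => DD_subset_ball hr i
    simp [he]

lemma J_ball_decomp (hn : 1 ≤ n) {p : ℝ} (hp0 : 0 < p) {F : Euc n → Y}
    (hF : Continuous F) {x : Euc n} {r : ℝ} (hr : 0 < r) :
    Jf p F (ball x r) = ∑' q : ℕ × ℕ, PP p F x r (-(q.1:ℤ)) (-(q.2:ℤ)) := by
  have hae := ball_ae_eq hn (x := x) hr
  have hmeasD : ∀ i : ℕ, MeasurableSet (DD x r (-(i:ℤ))) := fun i => measurableSet_DD x r _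
  have hdisj := DD_pairwise (x := x) hr
  have h1 : ∀ z₁ : Euc n, ∫⁻ z₂ in ball x r, ker p F z₁ z₂
      = ∑' i : ℕ, ∫⁻ z₂ in DD x r (-(i:ℤ)), ker p F z₁ z₂ := by
    intro z₁
    rw [setLIntegral_congr hae, lintegral_iUnion hmeasD hdisj]
  have h2 : Jf p F (ball x r)
      = ∑' i : ℕ, ∫⁻ z₁ in ball x r, ∫⁻ z₂ in DD x r (-(i:ℤ)), ker p F z₁ z₂ := by
    rw [Jf]
    rw [lintegral_congr h1]
    exact lintegral_tsum fun i =>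
      ((measurable_ker hp0.le hF).lintegral_prod_right').aemeasurable
  have h3 : ∀ i : ℕ, ∫⁻ z₁ in ball x r, ∫⁻ z₂ in DD x r (-(i:ℤ)), ker p F z₁ z₂
      = ∑' l : ℕ, PP p F x r (-(l:ℤ)) (-(i:ℤ)) := by
    intro i
    rw [setLIntegral_congr hae, lintegral_iUnion hmeasD hdisj]
    rfl
  rw [h2]
  rw [tsum_congr h3, ENNReal.tsum_comm]
  exact (ENNReal.tsum_prod' (f := fun (q : ℕ × ℕ) => PP p F x r (-(q.1:ℤ)) (-(q.2:ℤ)))).symm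

lemma tsum_split (f : ℕ × ℕ → ℝ≥0∞) :
    ∑' q : ℕ × ℕ, f q = (∑' a : ℕ, f (a, a)) + (∑' be : ℕ × ℕ, f (be.1+1+be.2, be.1))
      + ∑' ae : ℕ × ℕ, f (ae.1, ae.1+1+ae.2) := by
  classical
  set f1 : ℕ×ℕ → ℝ≥0∞ := fun q => if q.1 = q.2 then f q else 0 with hf1
  set f2 : ℕ×ℕ → ℝ≥0∞ := fun q => if q.2 < q.1 then f q else 0 with hf2
  set f3 : ℕ×ℕ → ℝ≥0∞ := fun q => if q.1 < q.2 then f q else 0 with hf3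
  have hpt : ∀ q, f q = f1 q + f2 q + f3 q := by
    intro q
    simp only [hf1, hf2, hf3]
    rcases lt_trichotomy q.1 q.2 with h | h | h
    · have h1 : q.1 ≠ q.2 := ne_of_lt h
      have h2 : ¬ q.2 < q.1 := by omega
      simp [h, h1, h2]
    · have h2 : ¬ q.2 < q.1 := by omega
      have h3 : ¬ q.1 < q.2 := by omega
      simp [h, h2, h3]
    · have h1 : q.1 ≠ q.2 := by omega
      have h3 : ¬ q.1 < q.2 := by omega
      simp [h, h1, h3]
  have e1 : ∑' q : ℕ×ℕ, f1 q = ∑' a : ℕ, f (a, a) := by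
    have hinj : Injective (fun a : ℕ => ((a, a) : ℕ×ℕ)) := by
      intro a b h
      exact congrArg Prod.fst h
    rw [← hinj.tsum_eq ?_]
    · exact tsum_congr fun a => by simp [hf1]
    · intro q hq
      rw [mem_support] at hq
      have hqq : q.1 = q.2 := by
        by_contra hc
        simp [hf1, hc] at hq
      exact ⟨q.1, by rw [Prod.ext_iff]; exact ⟨rfl, hqq⟩⟩
  have e2 : ∑' q : ℕ×ℕ, f2 q = ∑' be : ℕ×ℕ, f (be.1+1+be.2, be.1) := by
    have hinj : Injective (fun be : ℕ×ℕ => ((be.1+1+be.2, be.1) : ℕ×ℕ)) := by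
      intro a b h
      rw [Prod.ext_iff] at h
      obtain ⟨h1, h2⟩ := h
      simp only at h1 h2
      ext <;> omega
    rw [← hinj.tsum_eq ?_]
    · refine tsum_congr fun be => ?_
      have : be.1 < be.1 + 1 + be.2 := by omega
      simp [hf2, this]
    · intro q hq
      rw [mem_support] at hq
      have hqq : q.2 < q.1 := by
        by_contra hc
        simp [hf2, hc] at hq
      exact ⟨(q.2, q.1 - q.2 - 1), by rw [Prod.ext_iff]; constructor <;> simp <;> omega⟩
  have e3 : ∑' q : ℕ×ℕ, f3 q = ∑' ae : ℕ×ℕ, f (ae.1, ae.1+1+ae.2) := by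
    have hinj : Injective (fun ae : ℕ×ℕ => ((ae.1, ae.1+1+ae.2) : ℕ×ℕ)) := by
      intro a b h
      rw [Prod.ext_iff] at h
      obtain ⟨h1, h2⟩ := h
      simp only at h1 h2
      ext <;> omega
    rw [← hinj.tsum_eq ?_]
    · refine tsum_congr fun ae => ?_
      have : ae.1 < ae.1 + 1 + ae.2 := by omega
      simp [hf3, this]
    · intro q hq
      rw [mem_support] at hq
      have hqq : q.1 < q.2 := by
        by_contra hc
        simp [hf3, hc] at hq
      exact ⟨(q.1, q.2 - q.1 - 1), by rw [Prod.ext_iff]; constructor <;> simp <;> omega⟩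
  calc ∑' q : ℕ×ℕ, f q = ∑' q : ℕ×ℕ, (f1 q + f2 q + f3 q) := tsum_congr hpt
    _ = (∑' q : ℕ×ℕ, (f1 q + f2 q)) + ∑' q : ℕ×ℕ, f3 q := ENNReal.tsum_add
    _ = (∑' q : ℕ×ℕ, f1 q) + (∑' q : ℕ×ℕ, f2 q) + ∑' q : ℕ×ℕ, f3 q := by
        rw [ENNReal.tsum_add]
    _ = _ := by rw [e1, e2, e3]

lemma sum_bound {K0 q1 q2 : ℝ} (hK0 : 0 ≤ K0) (hq1 : 0 ≤ q1) (hq2 : 0 ≤ q2) (SSn : ℕ → ℝ≥0∞) :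
    ∑' be : ℕ×ℕ,
        ∑ u ∈ Finset.range (be.2+1), ENNReal.ofReal (K0*q1^u*q2^(be.2-u)) * SSn (be.1+(be.2-u))
      ≤ ENNReal.ofReal K0 * (1 - ENNReal.ofReal q1)⁻¹ *
          ((1 - ENNReal.ofReal q2)⁻¹ * ∑' i, SSn i) := by
  classical
  set C0 := ENNReal.ofReal K0
  set Q1 := ENNReal.ofReal q1
  set Q2 := ENNReal.ofReal q2
  set T := ∑' i, SSn i with hT
  have hco : ∀ u w : ℕ, ENNReal.ofReal (K0*q1^u*q2^w) = C0 * Q1^u * Q2^w := by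
    intro u w
    rw [ENNReal.ofReal_mul (by positivity), ENNReal.ofReal_mul hK0,
      ENNReal.ofReal_pow hq1, ENNReal.ofReal_pow hq2]
  set g : ℕ → ℕ → ℕ → ℝ≥0∞ := fun b e u =>
    if u ≤ e then ENNReal.ofReal (K0*q1^u*q2^(e-u)) * SSn (b+(e-u)) else 0 with hg
  have hfin : ∀ b e : ℕ,
      (∑ u ∈ Finset.range (e+1), ENNReal.ofReal (K0*q1^u*q2^(e-u)) * SSn (b+(e-u)))
      = ∑' u : ℕ, g b e u := by
    intro b e
    rw [tsum_eq_sum (s := Finset.range (e+1)) (fun u hu => by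
      have : ¬ u ≤ e := by simpa [Finset.mem_range, Nat.lt_succ_iff] using hu
      simp [hg, this])]
    refine (Finset.sum_congr rfl fun u hu => ?_).symm
    have : u ≤ e := by simpa [Finset.mem_range, Nat.lt_succ_iff] using hu
    simp [hg, this]
  have hinner : ∀ b u : ℕ, ∑' e : ℕ, g b e u = C0 * Q1^u * ∑' w : ℕ, Q2^w * SSn (b+w) := by
    intro b u
    have hinj : Injective (fun w : ℕ => u + w) := fun a b h => Nat.add_left_cancel h
    have hsupp : support (fun e => g b e u) ⊆ range (fun w : ℕ => u + w) := by
      intro e he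
      rw [mem_support] at he
      have hue : u ≤ e := by
        by_contra hc
        simp [hg, hc] at he
      exact ⟨e - u, by show u + (e - u) = e; omega⟩
    rw [← hinj.tsum_eq hsupp]
    have : ∀ w : ℕ, g b (u + w) u = C0 * Q1^u * (Q2^w * SSn (b+w)) := by
      intro w
      have h1 : u ≤ u + w := Nat.le_add_right u w
      have h2 : u + w - u = w := by omega
      simp only [hg, h1, if_true, h2, hco]
      ring
    rw [tsum_congr this, ENNReal.tsum_mul_left]
  calc ∑' be : ℕ×ℕ,
        ∑ u ∈ Finset.range (be.2+1), ENNReal.ofReal (K0*q1^u*q2^(be.2-u)) * SSn (be.1+(be.2-u))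
      = ∑' b : ℕ, ∑' e : ℕ, ∑ u ∈ Finset.range (e+1),
          ENNReal.ofReal (K0*q1^u*q2^(e-u)) * SSn (b+(e-u)) := ENNReal.tsum_prod'
    _ = ∑' b : ℕ, ∑' u : ℕ, ∑' e : ℕ, g b e u := by
        refine tsum_congr fun b => ?_
        rw [tsum_congr (hfin b), ENNReal.tsum_comm]
    _ = ∑' b : ℕ, (C0 * (∑' u : ℕ, Q1^u)) * ∑' w : ℕ, Q2^w * SSn (b+w) := by
        refine tsum_congr fun b => ?_
        rw [tsum_congr (hinner b), ENNReal.tsum_mul_right]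
        congr 1
        exact ENNReal.tsum_mul_left
    _ = (C0 * (∑' u : ℕ, Q1^u)) * ∑' b : ℕ, ∑' w : ℕ, Q2^w * SSn (b+w) := ENNReal.tsum_mul_left
    _ ≤ (C0 * (1 - Q1)⁻¹) * ((1 - Q2)⁻¹ * T) := by
        rw [ENNReal.tsum_geometric]
        refine mul_le_mul_right ?_ _
        calc ∑' b : ℕ, ∑' w : ℕ, Q2^w * SSn (b+w)
            = ∑' w : ℕ, ∑' b : ℕ, Q2^w * SSn (b+w) := ENNReal.tsum_comm
          _ = ∑' w : ℕ, Q2^w * ∑' b : ℕ, SSn (b+w) := by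
              refine tsum_congr fun w => ?_
              rw [ENNReal.tsum_mul_left]
          _ ≤ ∑' w : ℕ, Q2^w * T := by
              refine ENNReal.tsum_le_tsum fun w => ?_
              refine mul_le_mul_right ?_ _
              exact ENNReal.tsum_comp_le_tsum_of_injective
                (fun a b h => Nat.add_right_cancel h : Injective (fun b : ℕ => b + w)) SSn
          _ = (1 - Q2)⁻¹ * T := by rw [ENNReal.tsum_mul_right, ENNReal.tsum_geometric]
    _ = C0 * (1 - Q1)⁻¹ * ((1 - Q2)⁻¹ * T) := by ring

lemma coeff_scalar_bound (hn : 1 ≤ n) {p σ : ℝ} (hσ : 0 < σ) (hp : p = n + 2*σ) :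
    (1:ℝ≥0∞) + 2 * (ENNReal.ofReal (3*(2:ℝ)^(3*p)) * (1 - ENNReal.ofReal (3/2^(n+1):ℝ))⁻¹ *
        (1 - ENNReal.ofReal ((2:ℝ)^(-(2*σ))))⁻¹)
      ≤ ENNReal.ofReal (1 + 8 * (3*(2:ℝ)^(3*p)) * (1 - (2:ℝ)^(-(2*σ)))⁻¹) := by
  set K0 : ℝ := 3*(2:ℝ)^(3*p) with hK0def
  have hK0 : 0 ≤ K0 := by positivity
  set q2 : ℝ := (2:ℝ)^(-(2*σ)) with hq2def
  have hq2 : 0 ≤ q2 := by positivity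
  have hq2lt : q2 < 1 := Real.rpow_lt_one_of_one_lt_of_neg one_lt_two (by linarith)
  -- bound for the q1 geometric factor
  have hq1le : (3/2^(n+1):ℝ) ≤ 3/4 := by
    apply div_le_div_of_nonneg_left (by norm_num) (by norm_num)
    calc (4:ℝ) = 2^2 := by norm_num
      _ ≤ 2^(n+1) := pow_le_pow_right₀ one_le_two (by omega)
  have hQ1 : (1 - ENNReal.ofReal (3/2^(n+1):ℝ))⁻¹ ≤ ENNReal.ofReal 4 := by
    have h1 : ENNReal.ofReal (3/2^(n+1):ℝ) ≤ ENNReal.ofReal (3/4) :=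
      ENNReal.ofReal_le_ofReal hq1le
    have h2 : (1:ℝ≥0∞) - ENNReal.ofReal (3/4) ≤ 1 - ENNReal.ofReal (3/2^(n+1):ℝ) :=
      tsub_le_tsub_left h1 1
    refine le_trans (ENNReal.inv_le_inv' h2) (le_of_eq ?_)
    rw [← ENNReal.ofReal_one, ← ENNReal.ofReal_sub _ (by norm_num)]
    rw [show (1:ℝ) - 3/4 = 1/4 by norm_num, ← ENNReal.ofReal_inv_of_pos (by norm_num)]
    norm_num
  have hQ2 : (1 - ENNReal.ofReal q2)⁻¹ = ENNReal.ofReal ((1 - q2)⁻¹) := by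
    rw [← ENNReal.ofReal_one, ← ENNReal.ofReal_sub _ hq2,
      ← ENNReal.ofReal_inv_of_pos (by linarith)]
  calc (1:ℝ≥0∞) + 2 * (ENNReal.ofReal K0 * (1 - ENNReal.ofReal (3/2^(n+1):ℝ))⁻¹ *
        (1 - ENNReal.ofReal q2)⁻¹)
      ≤ 1 + 2 * (ENNReal.ofReal K0 * ENNReal.ofReal 4 * ENNReal.ofReal ((1 - q2)⁻¹)) := by
        rw [hQ2]
        exact add_le_add_right (mul_le_mul_right
          (mul_le_mul_left (mul_le_mul_right hQ1 _) _) 2) 1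
    _ = ENNReal.ofReal (1 + 8 * K0 * (1 - q2)⁻¹) := by
        have h1q2 : (0:ℝ) < 1 - q2 := by linarith
        have hinv : (0:ℝ) ≤ (1 - q2)⁻¹ := inv_nonneg.mpr h1q2.le
        have hK04 : (0:ℝ) ≤ K0 * 4 := by nlinarith
        have hprod : (0:ℝ) ≤ 2 * (K0 * 4 * (1 - q2)⁻¹) := by nlinarith
        rw [← ENNReal.ofReal_mul hK0, ← ENNReal.ofReal_mul hK04,
          show (2:ℝ≥0∞) = ENNReal.ofReal 2 by norm_num,
          ← ENNReal.ofReal_mul (by norm_num),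
          ← ENNReal.ofReal_one, ← ENNReal.ofReal_add (by norm_num) hprod]
        congr 1
        ring
    _ = _ := rfl

lemma master (hn : 1 ≤ n) {p σ : ℝ} (hσ : 0 < σ) (hp : p = n + 2*σ) {F : Euc n → Y}
    (hF : Continuous F) (x : Euc n) {r : ℝ} (hr : 0 < r) :
    Jf p F (ball x r) ≤ ENNReal.ofReal (1 + 8 * (3*(2:ℝ)^(3*p)) * (1 - (2:ℝ)^(-(2*σ)))⁻¹) *
      ∑' k : {k : ℤ // k ≤ -1}, Jf p F (AA x r (k:ℤ)) := by
  classical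
  have hp0 : 0 < p := by rw [hp]; positivity
  set K0 : ℝ := 3*(2:ℝ)^(3*p) with hK0def
  set q1 : ℝ := (3/2^(n+1) : ℝ) with hq1def
  set q2 : ℝ := (2:ℝ)^(-(2*σ)) with hq2def
  set SSn : ℕ → ℝ≥0∞ := fun i => Jf p F (AA x r (-1 - (i:ℤ))) with hSSn
  set T : ℝ≥0∞ := ∑' i : ℕ, SSn i with hTdef
  -- diagonal bound
  have hdiag : ∑' a : ℕ, PP p F x r (-(a:ℤ)) (-(a:ℤ)) ≤ T := by
    refine ENNReal.tsum_le_tsum fun a => ?_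
    refine le_trans (PP_diag_le hr (-(a:ℤ))) (le_of_eq ?_)
    rw [hSSn]
    norm_num
    rw [show -(a:ℤ) - 1 = -1 - (a:ℤ) by ring]
  -- upper bound part
  have hUB : ∑' be : ℕ×ℕ, PP p F x r (-(((be.1+1+be.2 : ℕ)):ℤ)) (-(be.1:ℤ)) ≤
      ENNReal.ofReal K0 * (1 - ENNReal.ofReal q1)⁻¹ * ((1 - ENNReal.ofReal q2)⁻¹ * T) := by
    refine le_trans (ENNReal.tsum_le_tsum fun be => ?_)
      (sum_bound (by positivity) (by positivity) (by positivity) SSn)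
    exact PP_far hn hσ hp hF hr be.1 be.2
  -- symmetric copy for lower part
  have hLB : ∑' ae : ℕ×ℕ, PP p F x r (-(ae.1:ℤ)) (-(((ae.1+1+ae.2 : ℕ)):ℤ)) ≤
      ENNReal.ofReal K0 * (1 - ENNReal.ofReal q1)⁻¹ * ((1 - ENNReal.ofReal q2)⁻¹ * T) := by
    refine le_trans (le_of_eq (tsum_congr fun ae => PP_symm hp0.le hF x r _ _)) hUB
  -- put everything together
  have hsplit := tsum_split (fun q : ℕ×ℕ => PP p F x r (-(q.1:ℤ)) (-(q.2:ℤ)))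
  have hJ : Jf p F (ball x r) ≤
      T + (ENNReal.ofReal K0 * (1 - ENNReal.ofReal q1)⁻¹ * ((1 - ENNReal.ofReal q2)⁻¹ * T))
        + (ENNReal.ofReal K0 * (1 - ENNReal.ofReal q1)⁻¹ * ((1 - ENNReal.ofReal q2)⁻¹ * T)) := by
    rw [J_ball_decomp hn hp0 hF hr, hsplit]
    exact add_le_add (add_le_add hdiag hUB) hLB
  have hfactor : T + (ENNReal.ofReal K0 * (1 - ENNReal.ofReal q1)⁻¹ * ((1 - ENNReal.ofReal q2)⁻¹ * T))
        + (ENNReal.ofReal K0 * (1 - ENNReal.ofReal q1)⁻¹ * ((1 - ENNReal.ofReal q2)⁻¹ * T))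
      = (1 + 2 * (ENNReal.ofReal K0 * (1 - ENNReal.ofReal q1)⁻¹ * (1 - ENNReal.ofReal q2)⁻¹)) * T := by
    ring
  have hcoef := coeff_scalar_bound hn hσ hp
  have hTsub : T ≤ ∑' k : {k : ℤ // k ≤ -1}, Jf p F (AA x r (k:ℤ)) := by
    have hinj : Injective (fun i : ℕ => (⟨-1 - (i:ℤ), by omega⟩ : {k : ℤ // k ≤ -1})) := by
      intro a b h
      have := congrArg Subtype.val h
      simp only at this
      omega
    exact ENNReal.tsum_comp_le_tsum_of_injective hinj
      (fun k : {k : ℤ // k ≤ -1} => Jf p F (AA x r (k:ℤ)))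
  calc Jf p F (ball x r)
      ≤ (1 + 2 * (ENNReal.ofReal K0 * (1 - ENNReal.ofReal q1)⁻¹ * (1 - ENNReal.ofReal q2)⁻¹)) * T := by
        rw [← hfactor]; exact hJ
    _ ≤ ENNReal.ofReal (1 + 8 * K0 * (1 - q2)⁻¹) * T := mul_le_mul_left hcoef T
    _ ≤ _ := mul_le_mul_right hTsub _

end Stmt16


/-- For non-integer `s > 0` there is `C > 0` depending only on `n, s` such that for
every Schwartz function `v`, every `x ∈ ℝ^n` and `r > 0`,
`[v]²_{B_r(x),s} ≤ C Σ_{k ≤ −1} [v]²_{A_k,s}` with `A_k = B_{2^{k+1}r}(x) ∖ B_{2^{k−1}r}(x)`. -/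
theorem stmt16 (n : ℕ) (hn : 1 ≤ n) (s : ℝ) (hs : 0 < s) (hsnotint : (⌊s⌋₊ : ℝ) ≠ s) :
    ∃ C : ℝ, 0 < C ∧
      ∀ (v : SchwartzMap (EuclideanSpace ℝ (Fin n)) ℝ)
        (x : EuclideanSpace ℝ (Fin n)) (r : ℝ), 0 < r →
        semiNormSq n s (Metric.ball x r) ⇑v ≤
          ENNReal.ofReal C *
            ∑' k : {k : ℤ // k ≤ -1},
              semiNormSq n s
                (Metric.ball x ((2 : ℝ) ^ ((k : ℤ) + 1) * r) \
                  Metric.ball x ((2 : ℝ) ^ ((k : ℤ) - 1) * r)) ⇑v := by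
  have hσ : 0 < s - (⌊s⌋₊ : ℝ) := sub_pos.mpr (lt_of_le_of_ne (Nat.floor_le hs.le) hsnotint)
  refine ⟨1 + 8 * (3*(2:ℝ)^(3*((n:ℝ) + 2*(s - (⌊s⌋₊:ℝ)))))
      * (1 - (2:ℝ)^(-(2*(s - (⌊s⌋₊:ℝ)))))⁻¹, ?_, ?_⟩
  · have hq2lt : (2:ℝ)^(-(2*(s - (⌊s⌋₊:ℝ)))) < 1 :=
      Real.rpow_lt_one_of_one_lt_of_neg one_lt_two (by linarith)
    have hq2pos : (0:ℝ) < (2:ℝ)^(-(2*(s - (⌊s⌋₊:ℝ)))) := by positivity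
    have hinv : (0:ℝ) ≤ (1 - (2:ℝ)^(-(2*(s - (⌊s⌋₊:ℝ)))))⁻¹ :=
      inv_nonneg.mpr (by linarith)
    have hK : (0:ℝ) ≤ 3*(2:ℝ)^(3*((n:ℝ) + 2*(s - (⌊s⌋₊:ℝ)))) := by positivity
    nlinarith
  · intro v x r hr
    have hF : Continuous (iteratedFDeriv ℝ ⌊s⌋₊ (⇑v)) :=
      (v.smooth ⊤).continuous_iteratedFDeriv (mod_cast le_top)
    exact Stmt16.master hn hσ rfl hF x hr
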